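/- For (r, r′) ∈ ℂ², one has t¹(r, r′)(p, q₁, q₂) = 0 for all p, q₁, q₂ ∈ ℕ if and only if (r, r′) ∈ L. -/
import Mathlib


noncomputable section

/-- A diagonal family for `(r, r')` (case of unitary groups, ρ = n, ρ' = n−1). -/
def IsDiagFam (n : ℕ) (r r' : ℂ) (s : ℕ → ℕ → ℂ) : Prop :=
  ∀ q₁ q₂ : ℕ,
    (r' + 2*(q₁ : ℂ) + (n : ℂ) - 1) * s q₁ q₂ = (r + 2*(q₁ : ℂ) + (n : ℂ)) * s (q₁ + 1) q₂ ∧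
    (r' + 2*(q₂ : ℂ) + (n : ℂ) - 1) * s q₁ q₂ = (r + 2*(q₂ : ℂ) + (n : ℂ)) * s q₁ (q₂ + 1)

/-- L = {(−ρ−2i, −ρ′−2j) : i, j ∈ ℕ, j ≤ i}, with ρ = n, ρ' = n−1. -/
def LC (n : ℕ) : Set (ℂ × ℂ) :=
  {p | ∃ i j : ℕ, j ≤ i ∧ p.1 = -(n : ℂ) - 2*(i : ℂ) ∧ p.2 = -((n : ℂ) - 1) - 2*(j : ℂ)}

/-- An admissible solution `t : ℕ³ → ℂ` for `(r, r')` in the unitary case: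
`t(p,q₁,q₂) = 0` unless `q₁+q₂ ≤ p` and `p−q₁−q₂` is even (equivalently `p+q₁+q₂` even),
and the relations (C1)–(C4) hold for all `(p,q₁,q₂)` with `q₁+q₂ ≤ p` and `p−q₁−q₂` even.
The natural-subtraction index `p − 1` is harmless: in (C1), (C3) its coefficient
`(p−q₁−q₂)/2` vanishes when `p = q₁+q₂`, and in (C2), (C4) we have `p ≥ q₁+q₂ ≥ 1`. -/
def IsAdmissibleC (n : ℕ) (r r' : ℂ) (t : ℕ → ℕ → ℕ → ℂ) : Prop :=
  (∀ p q₁ q₂ : ℕ, (p < q₁ + q₂ ∨ Odd (p + q₁ + q₂)) → t p q₁ q₂ = 0) ∧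
  (∀ p q₁ q₂ : ℕ, q₁ + q₂ ≤ p → Even (p + q₁ + q₂) →
    (((p : ℂ) + (n : ℂ) - 1) * (r' + 2*(q₁ : ℂ) + (n : ℂ) - 1) * t p q₁ q₂
      = (((p : ℂ) + (q₁ : ℂ) + (q₂ : ℂ))/2 + (n : ℂ) - 1)
          * (r + (p : ℂ) + (q₁ : ℂ) - (q₂ : ℂ) + (n : ℂ)) * t (p + 1) (q₁ + 1) q₂
        + (((p : ℂ) - (q₁ : ℂ) - (q₂ : ℂ))/2)
          * (r - (p : ℂ) + (q₁ : ℂ) - (q₂ : ℂ) - (n : ℂ) + 2) * t (p - 1) (q₁ + 1) q₂) ∧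
    (1 ≤ q₁ →
      ((p : ℂ) + (n : ℂ) - 1) * (r' - 2*(q₁ : ℂ) - (n : ℂ) + 3) * t p q₁ q₂
      = (((p : ℂ) + (q₁ : ℂ) + (q₂ : ℂ))/2 + (n : ℂ) - 2)
          * (r - (p : ℂ) - (q₁ : ℂ) + (q₂ : ℂ) - (n : ℂ) + 2) * t (p - 1) (q₁ - 1) q₂
        + (((p : ℂ) - (q₁ : ℂ) - (q₂ : ℂ))/2 + 1)
          * (r + (p : ℂ) - (q₁ : ℂ) + (q₂ : ℂ) + (n : ℂ)) * t (p + 1) (q₁ - 1) q₂) ∧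
    (((p : ℂ) + (n : ℂ) - 1) * (r' + 2*(q₂ : ℂ) + (n : ℂ) - 1) * t p q₁ q₂
      = (((p : ℂ) + (q₁ : ℂ) + (q₂ : ℂ))/2 + (n : ℂ) - 1)
          * (r + (p : ℂ) - (q₁ : ℂ) + (q₂ : ℂ) + (n : ℂ)) * t (p + 1) q₁ (q₂ + 1)
        + (((p : ℂ) - (q₁ : ℂ) - (q₂ : ℂ))/2)
          * (r - (p : ℂ) - (q₁ : ℂ) + (q₂ : ℂ) - (n : ℂ) + 2) * t (p - 1) q₁ (q₂ + 1)) ∧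
    (1 ≤ q₂ →
      ((p : ℂ) + (n : ℂ) - 1) * (r' - 2*(q₂ : ℂ) - (n : ℂ) + 3) * t p q₁ q₂
      = (((p : ℂ) + (q₁ : ℂ) + (q₂ : ℂ))/2 + (n : ℂ) - 2)
          * (r - (p : ℂ) + (q₁ : ℂ) - (q₂ : ℂ) - (n : ℂ) + 2) * t (p - 1) q₁ (q₂ - 1)
        + (((p : ℂ) - (q₁ : ℂ) - (q₂ : ℂ))/2 + 1)
          * (r + (p : ℂ) + (q₁ : ℂ) - (q₂ : ℂ) + (n : ℂ)) * t (p + 1) q₁ (q₂ - 1)))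

/-- The spectral function `t¹(r,r')` of the unitary case (Proposition 5.9):
`t¹(r,r')(p,q₁,q₂) = Σ_{k=0}^{(p−q₁−q₂)/2} 2^k (−(p−q₁−q₂)/2)_k ((p+q₁+q₂)/2+n−1)_k
((r'+n−1)/2)_{q₁} ((r'+n−1)/2)_{q₂} ((r−r'+1)/2)_k ((r+r'+1)/2)_k / (k!)²
· (1/Γ((r+n)/2+q₁+k)) · (1/Γ((r+n)/2+q₂+k))`
for `q₁+q₂ ≤ p` with `p−q₁−q₂` even, and `0` otherwise. -/
def t1C (n : ℕ) (r r' : ℂ) (p q₁ q₂ : ℕ) : ℂ :=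
  if p < q₁ + q₂ ∨ Odd (p + q₁ + q₂) then 0
  else ∑ k ∈ Finset.range ((p - q₁ - q₂) / 2 + 1),
    (2 : ℂ)^k * (ascPochhammer ℂ k).eval (-(((p : ℂ) - (q₁ : ℂ) - (q₂ : ℂ))/2)) *
      (ascPochhammer ℂ k).eval (((p : ℂ) + (q₁ : ℂ) + (q₂ : ℂ))/2 + (n : ℂ) - 1) *
      (ascPochhammer ℂ q₁).eval ((r' + (n : ℂ) - 1)/2) *
      (ascPochhammer ℂ q₂).eval ((r' + (n : ℂ) - 1)/2) *
      (ascPochhammer ℂ k).eval ((r - r' + 1)/2) *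
      (ascPochhammer ℂ k).eval ((r + r' + 1)/2) / ((k.factorial : ℂ))^2 *
      (Complex.Gamma ((r + (n : ℂ))/2 + (q₁ : ℂ) + (k : ℂ)))⁻¹ *
      (Complex.Gamma ((r + (n : ℂ))/2 + (q₂ : ℂ) + (k : ℂ)))⁻¹

theorem statement19 (n : ℕ) (hn : 2 ≤ n) (r r' : ℂ) :
    (∀ p q₁ q₂ : ℕ, t1C n r r' p q₁ q₂ = 0) ↔ (r, r') ∈ LC n := by
  constructor
  · intro h
    -- From (0,0,0): Gamma((r+n)/2)⁻² = 0
    have h0 := h 0 0 0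
    simp only [t1C, Nat.add_zero, Nat.zero_add, lt_irrefl, Nat.odd_iff, Nat.zero_mod,
      false_or] at h0
    rw [if_neg (by norm_num)] at h0
    simp only [Nat.zero_sub, Nat.zero_div, zero_add, Finset.sum_range_one, pow_zero,
      ascPochhammer_zero, Polynomial.eval_one, Nat.factorial_zero, Nat.cast_zero,
      Nat.cast_one, one_pow, one_mul, mul_one, div_one, add_zero] at h0
    have hG : Complex.Gamma ((r + (n : ℂ)) / 2) = 0 := by
      rcases mul_eq_zero.mp h0 with h' | h' <;>
        simpa using inv_eq_zero.mp h'
    obtain ⟨i, hi⟩ := (Complex.Gamma_eq_zero_iff _).mp hG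
    have hr : r = -(n : ℂ) - 2 * (i : ℂ) := by linear_combination 2 * hi
    -- From (2i+2, i+1, i+1): ((r'+n-1)/2)_{i+1}² = 0
    have h1 := h (2 * i + 2) (i + 1) (i + 1)
    have hcond : ¬(2 * i + 2 < (i + 1) + (i + 1) ∨ Odd ((2 * i + 2) + (i + 1) + (i + 1))) := by
      push_neg
      constructor
      · omega
      · simp [Nat.odd_iff]; omega
    rw [t1C, if_neg hcond] at h1
    have hsub : (2 * i + 2 - (i + 1) - (i + 1)) / 2 + 1 = 1 := by omega
    rw [hsub, Finset.sum_range_one] at h1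
    simp only [pow_zero, ascPochhammer_zero, Polynomial.eval_one, Nat.factorial_zero,
      Nat.cast_zero, Nat.cast_one, one_pow, one_mul, mul_one, div_one, add_zero] at h1
    have harg : (r + (n : ℂ)) / 2 + ((i : ℕ) + 1 : ℕ) = 1 := by
      rw [hr]; push_cast; ring
    rw [harg, Complex.Gamma_one, inv_one, mul_one, mul_one] at h1
    have hA : (ascPochhammer ℂ (i + 1)).eval ((r' + (n : ℂ) - 1) / 2) = 0 := by
      rcases mul_eq_zero.mp h1 with h' | h' <;> exact h'
    rw [ascPochhammer_eval_eq_zero_iff] at hA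
    obtain ⟨j, hj, hjr⟩ := hA
    refine ⟨i, j, by omega, hr, ?_⟩
    linear_combination 2 * hjr
  · rintro ⟨i, j, hji, hr, hr'⟩ p q₁ q₂
    simp only at hr hr'
    rw [t1C]
    split
    · rfl
    · rename_i hcond
      apply Finset.sum_eq_zero
      intro k hk
      -- key values
      have hv1 : (r' + (n : ℂ) - 1) / 2 = -(j : ℂ) := by rw [hr']; ring
      by_cases hq1 : j < q₁
      · have : (ascPochhammer ℂ q₁).eval ((r' + (n : ℂ) - 1) / 2) = 0 := by
          rw [hv1]; exact ascPochhammer_eval_neg_coe_nat_of_lt hq1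
        rw [this]; simp
      · push_neg at hq1
        by_cases hik : q₁ + k ≤ i
        · have harg : (r + (n : ℂ)) / 2 + (q₁ : ℂ) + (k : ℂ)
              = -((i - q₁ - k : ℕ) : ℂ) := by
            rw [hr]
            have h' : ((i - q₁ - k : ℕ) : ℂ) = (i : ℂ) - (q₁ : ℂ) - (k : ℂ) := by
              rw [Nat.sub_sub, Nat.cast_sub (by omega : q₁ + k ≤ i)]
              push_cast; ring
            rw [h']; ring
          have : (Complex.Gamma ((r + (n : ℂ)) / 2 + (q₁ : ℂ) + (k : ℂ)))⁻¹ = 0 := by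
            rw [harg, Complex.Gamma_neg_nat_eq_zero, inv_zero]
          rw [this]; simp
        · push_neg at hik
          have hv2 : (r - r' + 1) / 2 = -((i - j : ℕ) : ℂ) := by
            rw [hr, hr']
            have : ((i - j : ℕ) : ℂ) = (i : ℂ) - (j : ℂ) := by
              push_cast [Nat.cast_sub hji]; ring
            rw [this]; ring
          have : (ascPochhammer ℂ k).eval ((r - r' + 1) / 2) = 0 := by
            rw [hv2]
            exact ascPochhammer_eval_neg_coe_nat_of_lt (by omega)
          rw [this]; simp

end
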